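/- For m > 0 with √m T not a multiple of π, the function G_m defined on {(t,s): -t ≤ s ≤ t} by G_m(t,s) = (cos(√m s) csc(√m T) cos(√m (t−T)) + sinh(√m s) csch(√m T) sinh(√m (t−T)))/(2√m) satisfies ∂²G_m/∂t²(t,s) + m·G_m(−t,s) = 0 for all interior points with s ≠ ±t, where G_m(−t,s) is computed using the symmetry extension G_m(t,s)=G_m(s,t)=G_m(−t,−s). -/

import Mathlib

/-- Explicit expression of the Green's function `G_m` (for `m > 0`) on the
triangle `{(t,s) : -t ≤ s ≤ t}`. -/
noncomputable def gpos (m T t s : ℝ) : ℝ :=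
  (Real.cos (Real.sqrt m * s) * (1 / Real.sin (Real.sqrt m * T)) *
      Real.cos (Real.sqrt m * (t - T)) +
    Real.sinh (Real.sqrt m * s) * (1 / Real.sinh (Real.sqrt m * T)) *
      Real.sinh (Real.sqrt m * (t - T))) / (2 * Real.sqrt m)

/-- Extension of `gpos` to the whole square by the symmetries
`G(t,s) = G(s,t) = G(-t,-s)`. -/
noncomputable def Gfull (m T t s : ℝ) : ℝ :=
  if |s| ≤ |t| then (if 0 ≤ t then gpos m T t s else gpos m T (-t) (-s))
  else (if 0 ≤ s then gpos m T s t else gpos m T (-s) (-t))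

theorem stmt6 (m T : ℝ) (hm : 0 < m) (hT : 0 < T)
    (hres : ∀ k : ℤ, Real.sqrt m * T ≠ k * Real.pi) :
    ∀ t s : ℝ, -t < s → s < t → t ≤ T →
      deriv (deriv (fun τ => Gfull m T τ s)) t + m * Gfull m T (-t) s = 0 := by
  intro t s hst hts htT
  set c := Real.sqrt m with hc
  have hcc : c * c = m := Real.mul_self_sqrt hm.le
  have hst' : |s| < t := abs_lt.mpr ⟨by linarith, hts⟩
  have ht0 : 0 < t := lt_of_le_of_lt (abs_nonneg s) hst'
  -- derivatives of the basic pieces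
  have hinner : ∀ τ : ℝ, HasDerivAt (fun x => c * (x - T)) c τ := by
    intro τ
    simpa using ((hasDerivAt_id τ).sub_const T).const_mul c
  have hcos : ∀ τ : ℝ, HasDerivAt (fun x => Real.cos (c * (x - T)))
      (-Real.sin (c * (τ - T)) * c) τ := fun τ =>
    by have h := (Real.hasDerivAt_cos (c * (τ - T))).comp τ (hinner τ); exact h
  have hsin : ∀ τ : ℝ, HasDerivAt (fun x => Real.sin (c * (x - T)))
      (Real.cos (c * (τ - T)) * c) τ := fun τ =>
    by have h := (Real.hasDerivAt_sin (c * (τ - T))).comp τ (hinner τ); exact h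
  have hsinh : ∀ τ : ℝ, HasDerivAt (fun x => Real.sinh (c * (x - T)))
      (Real.cosh (c * (τ - T)) * c) τ := fun τ =>
    by have h := (Real.hasDerivAt_sinh (c * (τ - T))).comp τ (hinner τ); exact h
  have hcosh : ∀ τ : ℝ, HasDerivAt (fun x => Real.cosh (c * (x - T)))
      (Real.sinh (c * (τ - T)) * c) τ := fun τ =>
    by have h := (Real.hasDerivAt_cosh (c * (τ - T))).comp τ (hinner τ); exact h
  set A := Real.cos (c * s) * (1 / Real.sin (c * T)) with hA
  set B := Real.sinh (c * s) * (1 / Real.sinh (c * T)) with hB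
  -- first derivative of gpos in t
  have h1 : ∀ τ : ℝ, HasDerivAt (fun τ => gpos m T τ s)
      ((A * (-Real.sin (c * (τ - T)) * c) + B * (Real.cosh (c * (τ - T)) * c)) / (2 * c)) τ := by
    intro τ
    have : HasDerivAt (fun τ => (A * Real.cos (c * (τ - T)) + B * Real.sinh (c * (τ - T))) / (2 * c))
        ((A * (-Real.sin (c * (τ - T)) * c) + B * (Real.cosh (c * (τ - T)) * c)) / (2 * c)) τ :=
      (((hcos τ).const_mul A).add ((hsinh τ).const_mul B)).div_const (2 * c)
    simpa only [gpos, ← hc, ← hA, ← hB] using this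
  have hderiv1 : deriv (fun τ => gpos m T τ s) =
      fun τ => (A * (-Real.sin (c * (τ - T)) * c) + B * (Real.cosh (c * (τ - T)) * c)) / (2 * c) := by
    funext τ; exact (h1 τ).deriv
  -- second derivative at t
  have h2 : HasDerivAt (fun τ =>
      (A * (-Real.sin (c * (τ - T)) * c) + B * (Real.cosh (c * (τ - T)) * c)) / (2 * c))
      ((A * (-(Real.cos (c * (t - T)) * c) * c) + B * (Real.sinh (c * (t - T)) * c * c)) / (2 * c)) t := by
    have hL : HasDerivAt (fun τ => A * (-Real.sin (c * (τ - T)) * c))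
        (A * (-(Real.cos (c * (t - T)) * c) * c)) t :=
      (((hsin t).neg).mul_const c).const_mul A
    have hR : HasDerivAt (fun τ => B * (Real.cosh (c * (τ - T)) * c))
        (B * (Real.sinh (c * (t - T)) * c * c)) t :=
      ((hcosh t).mul_const c).const_mul B
    exact (hL.add hR).div_const (2 * c)
  -- locally, Gfull τ s = gpos τ s around t
  have hEq' : (fun τ => Gfull m T τ s) =ᶠ[nhds t] (fun τ => gpos m T τ s) := by
    filter_upwards [Ioi_mem_nhds hst'] with τ hτ
    have hτ0 : 0 ≤ τ := le_trans (abs_nonneg s) (le_of_lt hτ)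
    have h1 : |s| ≤ |τ| := by rw [abs_of_nonneg hτ0]; exact le_of_lt hτ
    simp [Gfull, h1, hτ0]
  have hd : deriv (deriv (fun τ => Gfull m T τ s)) t
      = (A * (-(Real.cos (c * (t - T)) * c) * c) + B * (Real.sinh (c * (t - T)) * c * c)) / (2 * c) := by
    rw [hEq'.deriv.deriv_eq, hderiv1]
    exact h2.deriv
  -- value of Gfull at (-t, s)
  have hG : Gfull m T (-t) s = gpos m T t (-s) := by
    have h1 : |s| ≤ |(-t)| := by rw [abs_neg, abs_of_pos ht0]; exact le_of_lt hst'
    have h2 : ¬ (0 ≤ -t) := by linarith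
    simp only [Gfull]
    rw [if_pos h1, if_neg h2, neg_neg]
  rw [hd, hG]
  simp only [gpos, ← hc, mul_neg, Real.cos_neg, Real.sinh_neg, ← hA, ← hB]
  linear_combination
    ((B * Real.sinh (c * (t - T)) - A * Real.cos (c * (t - T))) / (2 * c)) * hcc
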